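/- The bracket [e_i, e_j] = c_{i,j} e_{i+j}, where c_{i,j} = 1 if j - i ≡ 1 (mod 3), c_{i,j} = 0 if j - i ≡ 0 (mod 3), and c_{i,j} = -1 if j - i ≡ -1 (mod 3), satisfies the Jacobi identity on the free vector space with basis e_1, e_2, e_3, …, defining the Lie algebra 𝔫₁. -/

import Mathlib

/-- The structure constant `c_{i,j} ∈ {-1,0,1}` of 𝔫₁, depending only on `(j - i) mod 3`:
it is `1` if `j - i ≡ 1 (mod 3)`, `0` if `j - i ≡ 0 (mod 3)`, `-1` if `j - i ≡ -1 (mod 3)`. -/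
noncomputable def n1coeff (K : Type*) [Field K] (i j : ℕ) : K :=
  if ((j : ℤ) - (i : ℤ)) % 3 = 1 then 1
  else if ((j : ℤ) - (i : ℤ)) % 3 = 0 then 0
  else -1

/-- Structure constants of 𝔫₁: basis vectors are `e i = Finsupp.single i 1` for `i ≥ 1`
(index 0 unused), with `[e i, e j] = c_{i,j} • e (i+j)`. -/
noncomputable def n1c (K : Type*) [Field K] (i j : ℕ) : ℕ →₀ K :=
  if 1 ≤ i ∧ 1 ≤ j then n1coeff K i j • Finsupp.single (i + j) 1 else 0

/-- The bilinear extension of the bracket given by structure constants `c`. -/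
noncomputable def brkt (K : Type*) [Field K] (c : ℕ → ℕ → (ℕ →₀ K)) (x y : ℕ →₀ K) :
    ℕ →₀ K :=
  x.sum fun i a => y.sum fun j b => (a * b) • c i j

section Aux

variable {K : Type*} [Field K] (c : ℕ → ℕ → (ℕ →₀ K))

lemma brkt_zero_left (y : ℕ →₀ K) : brkt K c 0 y = 0 := by simp [brkt]

lemma brkt_zero_right (x : ℕ →₀ K) : brkt K c x 0 = 0 := by simp [brkt]

lemma brkt_add_left (x x' y : ℕ →₀ K) :
    brkt K c (x + x') y = brkt K c x y + brkt K c x' y := by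
  unfold brkt
  rw [Finsupp.sum_add_index] <;> simp [add_mul, add_smul, Finsupp.sum_add]

lemma brkt_add_right (x y y' : ℕ →₀ K) :
    brkt K c x (y + y') = brkt K c x y + brkt K c x y' := by
  unfold brkt
  rw [← Finsupp.sum_add]
  apply Finsupp.sum_congr
  intro i _
  rw [Finsupp.sum_add_index] <;> simp [mul_add, add_smul]

lemma brkt_smul_left (a : K) (x y : ℕ →₀ K) : brkt K c (a • x) y = a • brkt K c x y := by
  unfold brkt
  rw [Finsupp.sum_smul_index, Finsupp.smul_sum]
  · apply Finsupp.sum_congr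
    intro i _
    rw [Finsupp.smul_sum]
    apply Finsupp.sum_congr
    intro j _
    rw [smul_smul, mul_assoc]
  · simp

lemma brkt_single_single (i j : ℕ) (a b : K) :
    brkt K c (Finsupp.single i a) (Finsupp.single j b) = (a * b) • c i j := by
  unfold brkt
  rw [Finsupp.sum_single_index, Finsupp.sum_single_index] <;>
    simp [Finsupp.sum_single_index]

/-- Integer-valued coefficient as a function on `ZMod 3`. -/
def coZ (r : ZMod 3) : ℤ := if r = 1 then 1 else if r = 0 then 0 else -1

lemma coZ_jacobi (x y z : ZMod 3) :
    coZ (y - x) * coZ (z - (x + y)) + coZ (z - y) * coZ (x - (y + z)) +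
      coZ (x - z) * coZ (y - (z + x)) = 0 := by
  revert x y z; decide

lemma zmod3_iff (x m : ℤ) (hm : 0 ≤ m ∧ m < 3) :
    ((x : ZMod 3) = ((m : ℤ) : ZMod 3)) ↔ x % 3 = m := by
  rw [ZMod.intCast_eq_intCast_iff, Int.ModEq]
  omega

lemma n1coeff_eq_coZ (i j : ℕ) :
    n1coeff K i j = ((coZ ((j : ZMod 3) - (i : ZMod 3)) : ℤ) : K) := by
  have hcast : ((((j : ℤ) - (i : ℤ)) : ℤ) : ZMod 3) = (j : ZMod 3) - (i : ZMod 3) := by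
    push_cast; ring
  have h1 : ((j : ZMod 3) - (i : ZMod 3) = 1) ↔ ((j : ℤ) - (i : ℤ)) % 3 = 1 := by
    rw [← hcast, show (1 : ZMod 3) = ((1 : ℤ) : ZMod 3) by norm_num,
      zmod3_iff _ 1 (by norm_num)]
  have h0 : ((j : ZMod 3) - (i : ZMod 3) = 0) ↔ ((j : ℤ) - (i : ℤ)) % 3 = 0 := by
    rw [← hcast, show (0 : ZMod 3) = ((0 : ℤ) : ZMod 3) by norm_num,
      zmod3_iff _ 0 (by norm_num)]
  unfold n1coeff coZ
  by_cases hA : ((j : ℤ) - (i : ℤ)) % 3 = 1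
  · rw [if_pos hA, if_pos (h1.mpr hA)]; norm_num
  · by_cases hB : ((j : ℤ) - (i : ℤ)) % 3 = 0
    · rw [if_neg hA, if_pos hB, if_neg (fun h => hA (h1.mp h)), if_pos (h0.mpr hB)]
      norm_num
    · rw [if_neg hA, if_neg hB, if_neg (fun h => hA (h1.mp h)),
        if_neg (fun h => hB (h0.mp h))]
      norm_num

lemma n1coeff_jacobi (i j k : ℕ) :
    n1coeff K i j * n1coeff K (i + j) k + n1coeff K j k * n1coeff K (j + k) i +
      n1coeff K k i * n1coeff K (k + i) j = 0 := by
  simp only [n1coeff_eq_coZ]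
  have h := congrArg (fun n : ℤ => (n : K))
    (coZ_jacobi (i : ZMod 3) (j : ZMod 3) (k : ZMod 3))
  push_cast at h ⊢
  exact h

lemma n1coeff_antisymm (i j : ℕ) : n1coeff K i j = - n1coeff K j i := by
  unfold n1coeff
  split_ifs <;> try norm_num
  all_goals exfalso
  all_goals omega

lemma n1c_antisymm (i j : ℕ) : n1c K i j = - n1c K j i := by
  unfold n1c
  by_cases h : 1 ≤ i ∧ 1 ≤ j
  · rw [if_pos h, if_pos ⟨h.2, h.1⟩, n1coeff_antisymm, add_comm, neg_smul]
  · rw [if_neg h, if_neg (fun hc => h ⟨hc.2, hc.1⟩), neg_zero]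

lemma six {M : Type*} [AddCommGroup M] (x1 x2 y1 y2 z1 z2 : M)
    (h1 : x1 + y1 + z1 = 0) (h2 : x2 + y2 + z2 = 0) :
    x1 + x2 + (y1 + y2) + (z1 + z2) = 0 := by
  have h : x1 + x2 + (y1 + y2) + (z1 + z2) = (x1 + y1 + z1) + (x2 + y2 + z2) := by abel
  rw [h, h1, h2, add_zero]

end Aux

/-- The bracket `[e i, e j] = c_{i,j} e (i+j)` is antisymmetric and satisfies the Jacobi
identity, defining the Lie algebra 𝔫₁. -/
theorem n1_is_lie_algebra (K : Type*) [Field K] :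
    (∀ x y : ℕ →₀ K, brkt K (n1c K) x y = - brkt K (n1c K) y x) ∧
    (∀ x y z : ℕ →₀ K,
      brkt K (n1c K) (brkt K (n1c K) x y) z + brkt K (n1c K) (brkt K (n1c K) y z) x +
        brkt K (n1c K) (brkt K (n1c K) z x) y = 0) := by
  -- antisymmetry
  have anti : ∀ x y : ℕ →₀ K, brkt K (n1c K) x y = - brkt K (n1c K) y x := by
    intro x
    induction x using Finsupp.induction_linear with
    | zero => intro y; simp [brkt_zero_left, brkt_zero_right]
    | add f g hf hg =>
      intro y
      rw [brkt_add_left, brkt_add_right, hf, hg, neg_add]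
    | single i a =>
      intro y
      induction y using Finsupp.induction_linear with
      | zero => simp [brkt_zero_left, brkt_zero_right]
      | add f g hf hg => rw [brkt_add_left, brkt_add_right, hf, hg, neg_add]
      | single j b =>
        rw [brkt_single_single, brkt_single_single, n1c_antisymm i j, mul_comm a b]
        simp
  -- when one of the coefficients vanishes
  have hterm : ∀ p q r : ℕ, ∀ d' : K, ¬(1 ≤ p ∧ 1 ≤ q ∧ 1 ≤ r) →
      brkt K (n1c K) (n1c K p q) (Finsupp.single r d') = 0 := by
    intro p q r d' h
    by_cases hpq : 1 ≤ p ∧ 1 ≤ q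
    · rw [show n1c K p q = n1coeff K p q • Finsupp.single (p + q) 1 from if_pos hpq,
        brkt_smul_left, brkt_single_single]
      have hr : ¬ (1 ≤ r) := fun hr => h ⟨hpq.1, hpq.2, hr⟩
      rw [show n1c K (p + q) r = 0 from if_neg (fun hc' => hr hc'.2)]
      simp
    · rw [show n1c K p q = 0 from if_neg hpq, brkt_zero_left]
  -- single-level Jacobi
  have jac_single : ∀ (i j k : ℕ) (a b d : K),
      brkt K (n1c K) (brkt K (n1c K) (Finsupp.single i a) (Finsupp.single j b))
        (Finsupp.single k d) +
      brkt K (n1c K) (brkt K (n1c K) (Finsupp.single j b) (Finsupp.single k d))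
        (Finsupp.single i a) +
      brkt K (n1c K) (brkt K (n1c K) (Finsupp.single k d) (Finsupp.single i a))
        (Finsupp.single j b) = 0 := by
    intro i j k a b d
    rw [brkt_single_single, brkt_single_single, brkt_single_single,
      brkt_smul_left, brkt_smul_left, brkt_smul_left]
    by_cases hijk : 1 ≤ i ∧ 1 ≤ j ∧ 1 ≤ k
    · obtain ⟨hi, hj, hk⟩ := hijk
      rw [show n1c K i j = n1coeff K i j • Finsupp.single (i + j) 1 from if_pos ⟨hi, hj⟩,
        show n1c K j k = n1coeff K j k • Finsupp.single (j + k) 1 from if_pos ⟨hj, hk⟩,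
        show n1c K k i = n1coeff K k i • Finsupp.single (k + i) 1 from if_pos ⟨hk, hi⟩,
        brkt_smul_left, brkt_smul_left, brkt_smul_left,
        brkt_single_single, brkt_single_single, brkt_single_single,
        show n1c K (i + j) k = n1coeff K (i + j) k • Finsupp.single (i + j + k) 1 from
          if_pos ⟨by omega, hk⟩,
        show n1c K (j + k) i = n1coeff K (j + k) i • Finsupp.single (j + k + i) 1 from
          if_pos ⟨by omega, hi⟩,
        show n1c K (k + i) j = n1coeff K (k + i) j • Finsupp.single (k + i + j) 1 from
          if_pos ⟨by omega, hj⟩,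
        show j + k + i = i + j + k by ring, show k + i + j = i + j + k by ring]
      simp only [smul_smul]
      rw [← add_smul, ← add_smul]
      convert zero_smul K (Finsupp.single (i + j + k) (1 : K)) using 2
      linear_combination (a * b * d) * (n1coeff_jacobi (K := K) i j k)
    · rw [hterm i j k d hijk, hterm j k i a (fun h => hijk ⟨h.2.2, h.1, h.2.1⟩),
        hterm k i j b (fun h => hijk ⟨h.2.1, h.2.2, h.1⟩)]
      simp
  refine ⟨anti, ?_⟩
  intro x y z
  induction x using Finsupp.induction_linear with
  | zero => simp [brkt_zero_left, brkt_zero_right]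
  | add f g hf hg =>
    simp only [brkt_add_left, brkt_add_right]
    exact six _ _ _ _ _ _ hf hg
  | single i a =>
    induction y using Finsupp.induction_linear with
    | zero => simp [brkt_zero_left, brkt_zero_right]
    | add f g hf hg =>
      simp only [brkt_add_left, brkt_add_right]
      exact six _ _ _ _ _ _ hf hg
    | single j b =>
      induction z using Finsupp.induction_linear with
      | zero => simp [brkt_zero_left, brkt_zero_right]
      | add f g hf hg =>
        simp only [brkt_add_left, brkt_add_right]
        exact six _ _ _ _ _ _ hf hg
      | single k d => exact jac_single i j k a b d
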